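/- For every integer N≥1, every f_1∈V_{h,N} and every f_2∈V_{h,N−1}, one has ⟨L_N f_1, f_2⟩_{V_{h,N−1}} = −⟨f_1, R_{N−1} f_2⟩_{V_{h,N}}. Moreover, for every N≥0 and all f_1,f_2∈V_{h,N}, the q-Hahn operator is self-adjoint: ⟨D_N f_1, f_2⟩_{V_{h,N}} = ⟨f_1, D_N f_2⟩_{V_{h,N}}. -/

import Mathlib

open Finset

noncomputable section

/-- q-shifted factorial `(a;q)_m`. -/
def qPoch (q a : ℝ) (m : ℕ) : ℝ := ∏ k ∈ Finset.range m, (1 - a * q ^ k)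

/-- Partial sum `X_k = x_1 + ⋯ + x_k` (entries of index `< k`, 0-indexed). -/
def Xlt {h : ℕ} (x : Fin h → ℕ) (k : ℕ) : ℕ := ∑ j : Fin h, if (j : ℕ) < k then x j else 0

/-- Partial product `A_k = α_1 ⋯ α_k` (entries of index `< k`, 0-indexed). -/
def Apar {h : ℕ} (α : Fin h → ℝ) (k : ℕ) : ℝ := ∏ j : Fin h, if (j : ℕ) < k then α j else 1

/-- Raising operator `R_N : V_{h,N} → V_{h,N+1}`. -/
def Rop (q : ℝ) {h : ℕ} (N : ℕ) (f : (Fin h → ℕ) → ℂ) : (Fin h → ℕ) → ℂ := fun x =>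
  ∑ i : Fin h, (q : ℂ) ^ ((Xlt x i : ℤ) - N - 1) * (1 - (q : ℂ) ^ (x i)) *
    f (Function.update x i (x i - 1))

/-- Lowering operator `L_N : V_{h,N} → V_{h,N-1}` (its defining formula does not involve `N`). -/
def Lop (q : ℝ) {h : ℕ} (α : Fin h → ℝ) (f : (Fin h → ℕ) → ℂ) : (Fin h → ℕ) → ℂ := fun x =>
  ∑ j : Fin h, ((Apar α j : ℝ) : ℂ) * (q : ℂ) ^ ((j : ℕ) + Xlt x j) *
    ((α j : ℂ) * (q : ℂ) ^ (x j + 1) - 1) * f (Function.update x j (x j + 1))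

/-- The multidimensional q-Hahn operator `D_N : V_{h,N} → V_{h,N}`. -/
def Dop (q : ℝ) {h : ℕ} (α : Fin h → ℝ) (N : ℕ) (f : (Fin h → ℕ) → ℂ) : (Fin h → ℕ) → ℂ :=
  fun x =>
    (∑ i : Fin h, ∑ j : Fin h,
      if i ≠ j then
        ((Apar α j : ℝ) : ℂ) *
          (q : ℂ) ^ ((((j : ℕ) + Xlt x j + Xlt x i : ℕ) : ℤ) - N -
            (if (i : ℕ) < (j : ℕ) then 1 else 0)) *
          ((α j : ℂ) * (q : ℂ) ^ (x j + 1) - 1) * (1 - (q : ℂ) ^ (x i)) *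
          f (Function.update (Function.update x j (x j + 1)) i (x i - 1))
      else 0)
    + ((∑ j : Fin h,
          ((Apar α j : ℝ) : ℂ) * (q : ℂ) ^ ((((j : ℕ) + 2 * Xlt x j : ℕ) : ℤ) - N) *
            ((α j : ℂ) * (q : ℂ) ^ (x j) - 1) * (1 - (q : ℂ) ^ (x j)))
        + (((Apar α h : ℝ) : ℂ) * (q : ℂ) ^ (((h + N : ℕ) : ℤ) - 1) - 1) *
            (1 - (q : ℂ) ^ (-(N : ℤ)))) * f x

/-- Scalar product on `V_{h,N}`. -/
def innerV (q : ℝ) {h : ℕ} (α : Fin h → ℝ) (N : ℕ) (f g : (Fin h → ℕ) → ℂ) : ℂ :=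
  (q : ℂ) ^ (N * (N + 1) / 2) *
    ∑ x ∈ Finset.Nat.antidiagonalTuple h N,
      (∏ i : Fin h, ((qPoch q (q * α i) (x i) / qPoch q q (x i) : ℝ) : ℂ) *
        ((α i * q : ℝ) : ℂ) ^ ((N : ℤ) - Xlt x ((i : ℕ) + 1))) *
      f x * (starRingEnd ℂ) (g x)

/-- `RopIter q n k f = R_{n+k-1} ⋯ R_{n+1} R_n f`. -/
def RopIter (q : ℝ) {h : ℕ} (n : ℕ) : ℕ → ((Fin h → ℕ) → ℂ) → ((Fin h → ℕ) → ℂ)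
  | 0, f => f
  | k + 1, f => Rop q (n + k) (RopIter q n k f)

namespace QHahn

variable {h : ℕ}

lemma ite_eq_sum (j : Fin h) (c : ℕ → ℕ) (k : ℕ) :
    (if (j : ℕ) < k then c (j:ℕ) else 0) = ∑ i : Fin h, if i = j then (if (i : ℕ) < k then c (i:ℕ) else 0) else 0 := by
  rw [Finset.sum_ite_eq' Finset.univ j]; simp

lemma Xlt_update_succ (x : Fin h → ℕ) (j : Fin h) (k : ℕ) :
    Xlt (Function.update x j (x j + 1)) k = Xlt x k + if (j : ℕ) < k then 1 else 0 := by
  unfold Xlt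
  rw [show (if (j:ℕ) < k then 1 else 0) = ∑ i : Fin h, if i = j then (if (i : ℕ) < k then 1 else 0) else 0 by rw [Finset.sum_ite_eq' Finset.univ j]; simp]
  rw [← Finset.sum_add_distrib]
  refine Finset.sum_congr rfl fun i _ => ?_
  by_cases hij : i = j
  · subst hij; simp only [Function.update_self]
    split_ifs <;> omega
  · simp [Function.update_of_ne hij, hij]

lemma Xlt_update_pred (x : Fin h → ℕ) (i : Fin h) (hx : 1 ≤ x i) (k : ℕ) :
    Xlt (Function.update x i (x i - 1)) k + (if (i : ℕ) < k then 1 else 0) = Xlt x k := by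
  unfold Xlt
  rw [show (if (i:ℕ) < k then 1 else 0) = ∑ j : Fin h, if j = i then (if (j : ℕ) < k then 1 else 0) else 0 by rw [Finset.sum_ite_eq' Finset.univ i]; simp]
  rw [← Finset.sum_add_distrib]
  refine Finset.sum_congr rfl fun j _ => ?_
  by_cases hij : j = i
  · subst hij; simp only [Function.update_self, if_pos rfl]
    split_ifs <;> omega
  · simp [Function.update_of_ne hij, hij]

lemma sum_update_add (x : Fin h → ℕ) (j : Fin h) (v : ℕ) :
    (∑ i, Function.update x j v i) + x j = (∑ i, x i) + v := by
  rw [Finset.sum_update_of_mem (Finset.mem_univ j), Finset.sdiff_singleton_eq_erase,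
    ← Finset.add_sum_erase Finset.univ x (Finset.mem_univ j)]
  omega

lemma card_lt (j : Fin h) :
    (Finset.univ.filter (fun i : Fin h => (i : ℕ) < (j : ℕ))).card = (j : ℕ) := by
  have : (Finset.univ.filter (fun i : Fin h => (i : ℕ) < (j : ℕ))) = Finset.Iio j := by
    ext i
    simp only [Finset.mem_filter, Finset.mem_univ, true_and, Finset.mem_Iio, Fin.lt_def]
  rw [this, Fin.card_Iio]

lemma prod_ite_lt (c : ℂ) (j : Fin h) :
    (∏ i : Fin h, if (i : ℕ) < (j : ℕ) then c else 1) = c ^ (j : ℕ) := by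
  rw [Finset.prod_ite, Finset.prod_const, Finset.prod_const_one, mul_one, card_lt]

lemma qPoch_succ (q a : ℝ) (m : ℕ) : qPoch q a (m + 1) = qPoch q a m * (1 - a * q ^ m) := by
  rw [qPoch, Finset.prod_range_succ, qPoch]

lemma Apar_cast (α : Fin h → ℝ) (k : ℕ) :
    ((Apar α k : ℝ) : ℂ) = ∏ i : Fin h, if (i : ℕ) < k then ((α i : ℝ) : ℂ) else 1 := by
  rw [Apar, Complex.ofReal_prod]
  exact Finset.prod_congr rfl fun i _ => by split_ifs <;> simp

end QHahn
namespace QHahn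

variable {h : ℕ}

/-- The weight in the scalar product. -/
def Wt (q : ℝ) (α : Fin h → ℝ) (N : ℕ) (x : Fin h → ℕ) : ℂ :=
  ∏ i : Fin h, ((qPoch q (q * α i) (x i) / qPoch q q (x i) : ℝ) : ℂ) *
    ((α i * q : ℝ) : ℂ) ^ ((N : ℤ) - Xlt x ((i : ℕ) + 1))

lemma innerV_eq (q : ℝ) (α : Fin h → ℝ) (N : ℕ) (f g : (Fin h → ℕ) → ℂ) :
    innerV q α N f g = (q : ℂ) ^ (N * (N + 1) / 2) *
      ∑ x ∈ Finset.Nat.antidiagonalTuple h N, Wt q α N x * f x * (starRingEnd ℂ) (g x) := rfl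

lemma conj_Wt (q : ℝ) (α : Fin h → ℝ) (N : ℕ) (x : Fin h → ℕ) :
    (starRingEnd ℂ) (Wt q α N x) = Wt q α N x := by
  rw [Wt, map_prod]
  refine Finset.prod_congr rfl fun i _ => ?_
  rw [map_mul, map_zpow₀, Complex.conj_ofReal, Complex.conj_ofReal]

lemma Wt_succ (q : ℝ) (hq0 : 0 < q) (hq1 : q < 1) (α : Fin h → ℝ) (hα : ∀ i, 0 < α i)
    (M : ℕ) (x : Fin h → ℕ) (j : Fin h) :
    Wt q α (M + 1) (Function.update x j (x j + 1))
      = Wt q α M x * ((Apar α (j : ℕ) : ℝ) : ℂ) * (q : ℂ) ^ (j : ℕ) *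
        ((1 - (α j : ℂ) * (q : ℂ) ^ (x j + 1)) / (1 - (q : ℂ) ^ (x j + 1))) := by
  have key : ∀ i : Fin h,
      ((qPoch q (q * α i) (Function.update x j (x j + 1) i) /
          qPoch q q (Function.update x j (x j + 1) i) : ℝ) : ℂ) *
        ((α i * q : ℝ) : ℂ) ^ (((M + 1 : ℕ) : ℤ) - Xlt (Function.update x j (x j + 1)) ((i : ℕ) + 1))
      = (((qPoch q (q * α i) (x i) / qPoch q q (x i) : ℝ) : ℂ) *
          ((α i * q : ℝ) : ℂ) ^ ((M : ℤ) - Xlt x ((i : ℕ) + 1))) *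
        ((if i = j then (1 - (α j : ℂ) * (q : ℂ) ^ (x j + 1)) / (1 - (q : ℂ) ^ (x j + 1)) else 1) *
         ((if (i : ℕ) < (j : ℕ) then ((α i : ℝ) : ℂ) else 1) *
          (if (i : ℕ) < (j : ℕ) then (q : ℂ) else 1))) := by
    intro i
    have hXlt := Xlt_update_succ x j ((i : ℕ) + 1)
    have hb : ((α i * q : ℝ) : ℂ) ≠ 0 := by
      simp only [ne_eq, Complex.ofReal_eq_zero]
      exact ne_of_gt (mul_pos (hα i) hq0)
    by_cases hij : i = j
    · subst hij
      rw [Function.update_self, hXlt]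
      have hlt : (i : ℕ) < (i : ℕ) + 1 := Nat.lt_succ_self _
      rw [if_pos hlt, if_pos rfl, if_neg (lt_irrefl _), if_neg (lt_irrefl _)]
      have hexp : ((M + 1 : ℕ) : ℤ) - ((Xlt x ((i : ℕ) + 1) + 1 : ℕ) : ℤ)
          = (M : ℤ) - (Xlt x ((i : ℕ) + 1) : ℤ) := by push_cast; ring
      rw [hexp, qPoch_succ, qPoch_succ]
      have h1 : ((qPoch q (q * α i) (x i) * (1 - q * α i * q ^ (x i)) /
          (qPoch q q (x i) * (1 - q * q ^ (x i))) : ℝ) : ℂ)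
          = ((qPoch q (q * α i) (x i) / qPoch q q (x i) : ℝ) : ℂ) *
            ((1 - (α i : ℂ) * (q : ℂ) ^ (x i + 1)) / (1 - (q : ℂ) ^ (x i + 1))) := by
        push_cast
        rw [← div_mul_div_comm]
        ring_nf
      rw [h1]; ring
    · rw [Function.update_of_ne hij, hXlt]
      by_cases hlt : (j : ℕ) < (i : ℕ) + 1
      · have hnlt : ¬ ((i : ℕ) < (j : ℕ)) := by omega
        rw [if_pos hlt, if_neg hij, if_neg hnlt, if_neg hnlt]
        have hexp : ((M + 1 : ℕ) : ℤ) - ((Xlt x ((i : ℕ) + 1) + 1 : ℕ) : ℤ)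
            = (M : ℤ) - (Xlt x ((i : ℕ) + 1) : ℤ) := by push_cast; ring
        rw [hexp]; ring
      · have hlt' : (i : ℕ) < (j : ℕ) := by
          have : (i : ℕ) ≠ (j : ℕ) := fun hc => hij (Fin.ext hc)
          omega
        rw [if_neg hlt, if_neg hij, if_pos hlt', if_pos hlt', add_zero]
        have hexp : ((M + 1 : ℕ) : ℤ) - (Xlt x ((i : ℕ) + 1) : ℤ)
            = ((M : ℤ) - (Xlt x ((i : ℕ) + 1) : ℤ)) + 1 := by push_cast; ring
        rw [hexp, zpow_add₀ hb, zpow_one]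
        push_cast
        ring
  simp only [Wt]
  rw [Finset.prod_congr rfl (fun i _ => key i), Finset.prod_mul_distrib,
    Finset.prod_mul_distrib, Finset.prod_mul_distrib, Finset.prod_mul_distrib]
  rw [Finset.prod_ite_eq' Finset.univ j
    (fun _ => (1 - (α j : ℂ) * (q : ℂ) ^ (x j + 1)) / (1 - (q : ℂ) ^ (x j + 1)))]
  rw [← Apar_cast, prod_ite_lt]
  simp only [Finset.mem_univ, if_true]
  ring

end QHahn
namespace QHahn

variable {h : ℕ}

lemma adjoint (q : ℝ) (hq0 : 0 < q) (hq1 : q < 1) (α : Fin h → ℝ) (hα : ∀ i, 0 < α i)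
    (M : ℕ) (f₁ f₂ : (Fin h → ℕ) → ℂ) :
    innerV q α M (Lop q α f₁) f₂ = - innerV q α (M + 1) f₁ (Rop q M f₂) := by
  have hq : (q : ℂ) ≠ 0 := by simpa using ne_of_gt hq0
  have l1 : innerV q α M (Lop q α f₁) f₂ =
      ∑ j : Fin h, ∑ x ∈ Finset.Nat.antidiagonalTuple h M,
        (q : ℂ) ^ (M * (M + 1) / 2) * Wt q α M x *
          (((Apar α (j : ℕ) : ℝ) : ℂ) * (q : ℂ) ^ ((j : ℕ) + Xlt x (j : ℕ)) *
            ((α j : ℂ) * (q : ℂ) ^ (x j + 1) - 1)) *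
          f₁ (Function.update x j (x j + 1)) * (starRingEnd ℂ) (f₂ x) := by
    rw [innerV_eq, Finset.mul_sum, Finset.sum_comm]
    refine Finset.sum_congr rfl fun x _ => ?_
    simp only [Lop, Finset.mul_sum, Finset.sum_mul]
    exact Finset.sum_congr rfl fun j _ => by ring
  have r0 : innerV q α (M + 1) f₁ (Rop q M f₂) =
      ∑ j : Fin h, ∑ y ∈ Finset.Nat.antidiagonalTuple h (M + 1),
        ((q : ℂ) ^ ((M + 1) * (M + 1 + 1) / 2) * Wt q α (M + 1) y *
          ((q : ℂ) ^ ((Xlt y (j : ℕ) : ℤ) - M - 1) * (1 - (q : ℂ) ^ (y j))) *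
          f₁ y * (starRingEnd ℂ) (f₂ (Function.update y j (y j - 1)))) := by
    rw [innerV_eq, Finset.mul_sum, Finset.sum_comm]
    refine Finset.sum_congr rfl fun y _ => ?_
    simp only [Rop, map_sum, map_mul, map_sub, map_one, map_pow, map_zpow₀,
      Complex.conj_ofReal, Finset.mul_sum, Finset.sum_mul]
    exact Finset.sum_congr rfl fun j _ => by ring
  rw [l1, r0, ← Finset.sum_neg_distrib]
  refine Finset.sum_congr rfl fun j _ => ?_
  rw [← Finset.sum_neg_distrib]
  rw [← Finset.sum_filter_of_ne (p := fun y => y j ≠ 0)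
    (f := fun y => -((q : ℂ) ^ ((M + 1) * (M + 1 + 1) / 2) * Wt q α (M + 1) y *
          ((q : ℂ) ^ ((Xlt y (j : ℕ) : ℤ) - M - 1) * (1 - (q : ℂ) ^ (y j))) *
          f₁ y * (starRingEnd ℂ) (f₂ (Function.update y j (y j - 1)))))
    (by
      intro y _ hy
      by_contra h0
      have h0' : y j = 0 := by omega
      exact hy (by simp [h0']))]
  refine Finset.sum_nbij' (fun x => Function.update x j (x j + 1))
    (fun y => Function.update y j (y j - 1)) ?_ ?_ ?_ ?_ ?_
  · intro x hx
    rw [Finset.mem_filter]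
    constructor
    · rw [Finset.Nat.mem_antidiagonalTuple] at hx ⊢
      have := sum_update_add x j (x j + 1)
      omega
    · simp
  · intro y hy
    rw [Finset.mem_filter] at hy
    obtain ⟨hy1, hy2⟩ := hy
    rw [Finset.Nat.mem_antidiagonalTuple] at hy1 ⊢
    have := sum_update_add y j (y j - 1)
    omega
  · intro x _
    simp only [Function.update_idem, Function.update_self, Nat.add_sub_cancel]
    exact Function.update_eq_self j x
  · intro y hy
    rw [Finset.mem_filter] at hy
    simp only [Function.update_idem, Function.update_self]
    rw [Nat.sub_add_cancel (Nat.one_le_iff_ne_zero.mpr hy.2)]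
    exact Function.update_eq_self j y
  · intro x hx
    have hupd : Function.update (Function.update x j (x j + 1)) j
        (Function.update x j (x j + 1) j - 1) = x := by
      simp only [Function.update_idem, Function.update_self, Nat.add_sub_cancel]
      exact Function.update_eq_self j x
    have hyj : Function.update x j (x j + 1) j = x j + 1 := Function.update_self j _ x
    have hXlt : Xlt (Function.update x j (x j + 1)) (j : ℕ) = Xlt x (j : ℕ) := by
      rw [Xlt_update_succ, if_neg (lt_irrefl _), add_zero]
    have habs : ∀ A t s z : ℂ, s ≠ 0 → A * (t / s) * (z * s) = A * t * z := by
      intro A t s z hs0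
      field_simp
    have hs : (1 : ℂ) - (q : ℂ) ^ (x j + 1) ≠ 0 := by
      have h1 : q ^ (x j + 1) < 1 := pow_lt_one₀ (le_of_lt hq0) hq1 (Nat.succ_ne_zero _)
      have : ((1 - q ^ (x j + 1) : ℝ) : ℂ) ≠ 0 := by
        simp only [ne_eq, Complex.ofReal_eq_zero]
        linarith
      simpa using this
    have hT : (M + 1) * (M + 1 + 1) / 2 = M * (M + 1) / 2 + (M + 1) := by
      have h2 : (M + 1) * (M + 1 + 1) = M * (M + 1) + (M + 1) * 2 := by ring
      rw [h2, Nat.add_mul_div_right _ _ (by norm_num)]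
    have hz : (q : ℂ) ^ ((M + 1 : ℕ)) * (q : ℂ) ^ ((Xlt x (j : ℕ) : ℤ) - M - 1)
        = (q : ℂ) ^ (Xlt x (j : ℕ)) := by
      rw [← zpow_natCast (q : ℂ) (M + 1), ← zpow_natCast (q : ℂ) (Xlt x (j : ℕ)),
        ← zpow_add₀ hq]
      congr 1
      push_cast
      ring
    have key : Wt q α (M + 1) (Function.update x j (x j + 1)) *
          ((q : ℂ) ^ ((Xlt x (j : ℕ) : ℤ) - M - 1) * (1 - (q : ℂ) ^ (x j + 1)))
        = Wt q α M x * ((Apar α (j : ℕ) : ℝ) : ℂ) * (q : ℂ) ^ (j : ℕ) *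
            (1 - (α j : ℂ) * (q : ℂ) ^ (x j + 1)) * (q : ℂ) ^ ((Xlt x (j : ℕ) : ℤ) - M - 1) := by
      rw [Wt_succ q hq0 hq1 α hα M x j]
      exact habs _ _ _ _ hs
    rw [hupd, hyj, hXlt, hT]
    linear_combination ((q : ℂ) ^ (M * (M + 1) / 2) * (q : ℂ) ^ (M + 1) *
        f₁ (Function.update x j (x j + 1)) * (starRingEnd ℂ) (f₂ x)) * key +
      ((q : ℂ) ^ (M * (M + 1) / 2) * (q : ℂ) ^ (j : ℕ) *
        (1 - (α j : ℂ) * (q : ℂ) ^ (x j + 1)) * Wt q α M x * ((Apar α (j : ℕ) : ℝ) : ℂ) *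
        f₁ (Function.update x j (x j + 1)) * (starRingEnd ℂ) (f₂ x)) * hz

end QHahn
namespace QHahn

variable {h : ℕ}

/-- The constant in `D_N = R_{N-1} L_N + cc`. -/
def cc (q : ℝ) (h : ℕ) (α : Fin h → ℝ) (N : ℕ) : ℂ :=
  (((Apar α h : ℝ) : ℂ) * (q : ℂ) ^ (((h + N : ℕ) : ℤ) - 1) - 1) * (1 - (q : ℂ) ^ (-(N : ℤ)))

lemma Dop_eq (q : ℝ) (hq0 : 0 < q) (hq1 : q < 1) (α : Fin h → ℝ) (hα : ∀ i, 0 < α i)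
    (M : ℕ) (f : (Fin h → ℕ) → ℂ) (x : Fin h → ℕ) :
    Dop q α (M + 1) f x = Rop q M (Lop q α f) x + cc q h α (M + 1) * f x := by
  have hq : (q : ℂ) ≠ 0 := by simpa using ne_of_gt hq0
  -- the (i,j) term of R∘L
  set T : Fin h → Fin h → ℂ := fun i j =>
    (q : ℂ) ^ ((Xlt x (i : ℕ) : ℤ) - M - 1) * (1 - (q : ℂ) ^ (x i)) *
      (((Apar α (j : ℕ) : ℝ) : ℂ) *
        (q : ℂ) ^ ((j : ℕ) + Xlt (Function.update x i (x i - 1)) (j : ℕ)) *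
        ((α j : ℂ) * (q : ℂ) ^ (Function.update x i (x i - 1) j + 1) - 1) *
        f (Function.update (Function.update x i (x i - 1)) j
            (Function.update x i (x i - 1) j + 1))) with hT
  have hRL : Rop q M (Lop q α f) x = ∑ i : Fin h, ∑ j : Fin h, T i j := by
    simp only [Rop, Lop, Finset.mul_sum, hT]
  -- off-diagonal terms agree
  have h1 : ∀ i j : Fin h, i ≠ j →
      (((Apar α (j : ℕ) : ℝ) : ℂ) *
        (q : ℂ) ^ ((((j : ℕ) + Xlt x (j : ℕ) + Xlt x (i : ℕ) : ℕ) : ℤ) - (M + 1 : ℕ) -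
          (if (i : ℕ) < (j : ℕ) then 1 else 0)) *
        ((α j : ℂ) * (q : ℂ) ^ (x j + 1) - 1) * (1 - (q : ℂ) ^ (x i)) *
        f (Function.update (Function.update x j (x j + 1)) i (x i - 1))) = T i j := by
    intro i j hij
    have hji : j ≠ i := fun hc => hij hc.symm
    rw [hT]
    dsimp only
    by_cases hxi : x i = 0
    · simp [hxi]
    · have hxi1 : 1 ≤ x i := Nat.one_le_iff_ne_zero.mpr hxi
      have hupdj : Function.update x i (x i - 1) j = x j := Function.update_of_ne hji _ x
      have hXl := Xlt_update_pred x i hxi1 (j : ℕ)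
      have hcomm : Function.update (Function.update x i (x i - 1)) j (x j + 1)
          = Function.update (Function.update x j (x j + 1)) i (x i - 1) :=
        Function.update_comm hij (x i - 1) (x j + 1) x
      rw [hupdj, hcomm]
      have hexp : (q : ℂ) ^ ((Xlt x (i : ℕ) : ℤ) - M - 1) *
          (q : ℂ) ^ ((j : ℕ) + Xlt (Function.update x i (x i - 1)) (j : ℕ))
          = (q : ℂ) ^ ((((j : ℕ) + Xlt x (j : ℕ) + Xlt x (i : ℕ) : ℕ) : ℤ) - (M + 1 : ℕ) -
              (if (i : ℕ) < (j : ℕ) then 1 else 0)) := by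
        rw [← zpow_natCast (q : ℂ) ((j : ℕ) + Xlt (Function.update x i (x i - 1)) (j : ℕ)),
          ← zpow_add₀ hq]
        congr 1
        by_cases hlt : (i : ℕ) < (j : ℕ) <;>
          · simp only [hlt, if_true, if_false] at hXl ⊢
            push_cast
            omega
      linear_combination (((Apar α (j : ℕ) : ℝ) : ℂ) * ((α j : ℂ) * (q : ℂ) ^ (x j + 1) - 1) *
        (1 - (q : ℂ) ^ (x i)) *
        f (Function.update (Function.update x j (x j + 1)) i (x i - 1))) * hexp.symm
  -- diagonal terms
  have h2 : ∀ i : Fin h, T i i =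
      (((Apar α (i : ℕ) : ℝ) : ℂ) * (q : ℂ) ^ ((((i : ℕ) + 2 * Xlt x (i : ℕ) : ℕ) : ℤ) - (M + 1 : ℕ)) *
        ((α i : ℂ) * (q : ℂ) ^ (x i) - 1) * (1 - (q : ℂ) ^ (x i))) * f x := by
    intro i
    rw [hT]
    dsimp only
    by_cases hxi : x i = 0
    · simp [hxi]
    · have hxi1 : 1 ≤ x i := Nat.one_le_iff_ne_zero.mpr hxi
      have hupdi : Function.update x i (x i - 1) i = x i - 1 := Function.update_self i _ x
      have hXl := Xlt_update_pred x i hxi1 (i : ℕ)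
      rw [if_neg (lt_irrefl _), add_zero] at hXl
      have harg : Function.update (Function.update x i (x i - 1)) i
          (Function.update x i (x i - 1) i + 1) = x := by
        rw [hupdi, Function.update_idem, Nat.sub_add_cancel hxi1]
        exact Function.update_eq_self i x
      have hpow : (q : ℂ) ^ (Function.update x i (x i - 1) i + 1) = (q : ℂ) ^ (x i) := by
        rw [hupdi, Nat.sub_add_cancel hxi1]
      have hexp : (q : ℂ) ^ ((Xlt x (i : ℕ) : ℤ) - M - 1) *
          (q : ℂ) ^ ((i : ℕ) + Xlt (Function.update x i (x i - 1)) (i : ℕ))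
          = (q : ℂ) ^ ((((i : ℕ) + 2 * Xlt x (i : ℕ) : ℕ) : ℤ) - (M + 1 : ℕ)) := by
        rw [← zpow_natCast (q : ℂ) ((i : ℕ) + Xlt (Function.update x i (x i - 1)) (i : ℕ)),
          ← zpow_add₀ hq]
        congr 1
        push_cast
        omega
      rw [harg, hpow]
      linear_combination (((Apar α (i : ℕ) : ℝ) : ℂ) * ((α i : ℂ) * (q : ℂ) ^ (x i) - 1) *
        (1 - (q : ℂ) ^ (x i)) * f x) * hexp
  -- assemble
  rw [hRL, Dop, cc]
  have main : ∀ i : Fin h,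
      (∑ j : Fin h, if i ≠ j then
        ((Apar α (j : ℕ) : ℝ) : ℂ) *
          (q : ℂ) ^ ((((j : ℕ) + Xlt x (j : ℕ) + Xlt x (i : ℕ) : ℕ) : ℤ) - ((M + 1 : ℕ)) -
            (if (i : ℕ) < (j : ℕ) then 1 else 0)) *
          ((α j : ℂ) * (q : ℂ) ^ (x j + 1) - 1) * (1 - (q : ℂ) ^ (x i)) *
          f (Function.update (Function.update x j (x j + 1)) i (x i - 1))
        else 0) + T i i = ∑ j : Fin h, T i j := by
    intro i
    have e1 : (∑ j : Fin h, if i ≠ j then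
        ((Apar α (j : ℕ) : ℝ) : ℂ) *
          (q : ℂ) ^ ((((j : ℕ) + Xlt x (j : ℕ) + Xlt x (i : ℕ) : ℕ) : ℤ) - ((M + 1 : ℕ)) -
            (if (i : ℕ) < (j : ℕ) then 1 else 0)) *
          ((α j : ℂ) * (q : ℂ) ^ (x j + 1) - 1) * (1 - (q : ℂ) ^ (x i)) *
          f (Function.update (Function.update x j (x j + 1)) i (x i - 1))
        else 0) = ∑ j : Fin h, if i ≠ j then T i j else 0 := by
      refine Finset.sum_congr rfl fun j _ => ?_
      by_cases hij : i = j
      · simp [hij]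
      · rw [if_pos hij, if_pos hij, h1 i j hij]
    have e2 : T i i = ∑ j : Fin h, if i = j then T i j else 0 := by
      rw [Finset.sum_ite_eq]
      simp
    rw [e1, e2, ← Finset.sum_add_distrib]
    refine Finset.sum_congr rfl fun j _ => ?_
    by_cases hij : i = j <;> simp [hij]
  calc (∑ i : Fin h, ∑ j : Fin h, if i ≠ j then
        ((Apar α (j : ℕ) : ℝ) : ℂ) *
          (q : ℂ) ^ ((((j : ℕ) + Xlt x (j : ℕ) + Xlt x (i : ℕ) : ℕ) : ℤ) - ((M + 1 : ℕ)) -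
            (if (i : ℕ) < (j : ℕ) then 1 else 0)) *
          ((α j : ℂ) * (q : ℂ) ^ (x j + 1) - 1) * (1 - (q : ℂ) ^ (x i)) *
          f (Function.update (Function.update x j (x j + 1)) i (x i - 1))
        else 0)
      + ((∑ j : Fin h,
          ((Apar α (j : ℕ) : ℝ) : ℂ) * (q : ℂ) ^ ((((j : ℕ) + 2 * Xlt x (j : ℕ) : ℕ) : ℤ) - ((M + 1 : ℕ))) *
            ((α j : ℂ) * (q : ℂ) ^ (x j) - 1) * (1 - (q : ℂ) ^ (x j)))
        + (((Apar α h : ℝ) : ℂ) * (q : ℂ) ^ (((h + (M + 1) : ℕ) : ℤ) - 1) - 1) *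
            (1 - (q : ℂ) ^ (-((M + 1 : ℕ) : ℤ)))) * f x
      = (∑ i : Fin h, ((∑ j : Fin h, if i ≠ j then
          ((Apar α (j : ℕ) : ℝ) : ℂ) *
            (q : ℂ) ^ ((((j : ℕ) + Xlt x (j : ℕ) + Xlt x (i : ℕ) : ℕ) : ℤ) - ((M + 1 : ℕ)) -
              (if (i : ℕ) < (j : ℕ) then 1 else 0)) *
            ((α j : ℂ) * (q : ℂ) ^ (x j + 1) - 1) * (1 - (q : ℂ) ^ (x i)) *
            f (Function.update (Function.update x j (x j + 1)) i (x i - 1))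
          else 0) + T i i))
        + (((Apar α h : ℝ) : ℂ) * (q : ℂ) ^ (((h + (M + 1) : ℕ) : ℤ) - 1) - 1) *
            (1 - (q : ℂ) ^ (-((M + 1 : ℕ) : ℤ))) * f x := by
        rw [Finset.sum_add_distrib, add_mul, Finset.sum_mul]
        have : ∀ i : Fin h, T i i =
          (((Apar α (i : ℕ) : ℝ) : ℂ) * (q : ℂ) ^ ((((i : ℕ) + 2 * Xlt x (i : ℕ) : ℕ) : ℤ) - ((M + 1 : ℕ))) *
            ((α i : ℂ) * (q : ℂ) ^ (x i) - 1) * (1 - (q : ℂ) ^ (x i))) * f x := h2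
        rw [Finset.sum_congr rfl fun i _ => (this i).symm]
        ring
    _ = (∑ i : Fin h, ∑ j : Fin h, T i j)
        + (((Apar α h : ℝ) : ℂ) * (q : ℂ) ^ (((h + (M + 1) : ℕ) : ℤ) - 1) - 1) *
            (1 - (q : ℂ) ^ (-((M + 1 : ℕ) : ℤ))) * f x := by
        rw [Finset.sum_congr rfl fun i _ => main i]

end QHahn
namespace QHahn

variable {h : ℕ}

lemma innerV_conj (q : ℝ) (α : Fin h → ℝ) (N : ℕ) (f g : (Fin h → ℕ) → ℂ) :
    innerV q α N f g = (starRingEnd ℂ) (innerV q α N g f) := by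
  rw [innerV_eq, innerV_eq, map_mul, map_sum, map_pow, Complex.conj_ofReal]
  congr 1
  refine Finset.sum_congr rfl fun x _ => ?_
  rw [map_mul, map_mul, conj_Wt, Complex.conj_conj]
  ring

lemma innerV_congr_left (q : ℝ) (α : Fin h → ℝ) (N : ℕ) {F G : (Fin h → ℕ) → ℂ}
    (g : (Fin h → ℕ) → ℂ) (hFG : ∀ x ∈ Finset.Nat.antidiagonalTuple h N, F x = G x) :
    innerV q α N F g = innerV q α N G g := by
  rw [innerV_eq, innerV_eq]
  congr 1
  exact Finset.sum_congr rfl fun x hx => by rw [hFG x hx]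

lemma innerV_congr_right (q : ℝ) (α : Fin h → ℝ) (N : ℕ) {F G : (Fin h → ℕ) → ℂ}
    (f : (Fin h → ℕ) → ℂ) (hFG : ∀ x ∈ Finset.Nat.antidiagonalTuple h N, F x = G x) :
    innerV q α N f F = innerV q α N f G := by
  rw [innerV_eq, innerV_eq]
  congr 1
  exact Finset.sum_congr rfl fun x hx => by rw [hFG x hx]

lemma innerV_zero_left (q : ℝ) (α : Fin h → ℝ) (N : ℕ) (g : (Fin h → ℕ) → ℂ) :
    innerV q α N (fun _ => 0) g = 0 := by
  simp [innerV_eq]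

lemma innerV_zero_right (q : ℝ) (α : Fin h → ℝ) (N : ℕ) (f : (Fin h → ℕ) → ℂ) :
    innerV q α N f (fun _ => 0) = 0 := by
  simp [innerV_eq]

lemma innerV_add_mul_left (q : ℝ) (α : Fin h → ℝ) (N : ℕ) (c : ℂ)
    (F G g : (Fin h → ℕ) → ℂ) :
    innerV q α N (fun y => F y + c * G y) g
      = innerV q α N F g + c * innerV q α N G g := by
  simp only [innerV_eq]
  rw [Finset.sum_congr rfl (fun x _ => show Wt q α N x * (F x + c * G x) * (starRingEnd ℂ) (g x)
    = Wt q α N x * F x * (starRingEnd ℂ) (g x) + c * (Wt q α N x * G x * (starRingEnd ℂ) (g x))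
    from by ring), Finset.sum_add_distrib, ← Finset.mul_sum]
  ring

lemma innerV_add_mul_right (q : ℝ) (α : Fin h → ℝ) (N : ℕ) (c : ℂ)
    (F G f : (Fin h → ℕ) → ℂ) :
    innerV q α N f (fun y => F y + c * G y)
      = innerV q α N f F + (starRingEnd ℂ) c * innerV q α N f G := by
  simp only [innerV_eq]
  rw [Finset.sum_congr rfl (fun x _ => show Wt q α N x * f x * (starRingEnd ℂ) (F x + c * G x)
    = Wt q α N x * f x * (starRingEnd ℂ) (F x)
      + (starRingEnd ℂ) c * (Wt q α N x * f x * (starRingEnd ℂ) (G x))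
    from by rw [map_add, map_mul]; ring), Finset.sum_add_distrib, ← Finset.mul_sum]
  ring

lemma conj_cc (q : ℝ) (α : Fin h → ℝ) (N : ℕ) :
    (starRingEnd ℂ) (cc q h α N) = cc q h α N := by
  simp [cc, map_mul, map_sub, map_zpow₀, Complex.conj_ofReal]

end QHahn

open QHahn in
theorem stmt2 (q : ℝ) (hq0 : 0 < q) (hq1 : q < 1) (h : ℕ) (hh : 1 ≤ h)
    (α : Fin h → ℝ) (hα : ∀ i, 0 < α i) :
    (∀ N : ℕ, 1 ≤ N → ∀ f₁ f₂ : (Fin h → ℕ) → ℂ,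
      innerV q α (N - 1) (Lop q α f₁) f₂ = -innerV q α N f₁ (Rop q (N - 1) f₂)) ∧
    (∀ N : ℕ, ∀ f₁ f₂ : (Fin h → ℕ) → ℂ,
      innerV q α N (Dop q α N f₁) f₂ = innerV q α N f₁ (Dop q α N f₂)) := by
  constructor
  · intro N hN f₁ f₂
    obtain ⟨M, rfl⟩ : ∃ M, N = M + 1 := ⟨N - 1, by omega⟩
    simpa using adjoint q hq0 hq1 α hα M f₁ f₂
  · intro N f₁ f₂
    rcases N with _ | M
    · have hz : ∀ g : (Fin h → ℕ) → ℂ, ∀ x ∈ Finset.Nat.antidiagonalTuple h 0,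
          Dop q α 0 g x = (fun _ => (0 : ℂ)) x := by
        intro g x hx
        rw [Finset.Nat.mem_antidiagonalTuple] at hx
        have hx0 : ∀ i, x i = 0 := by
          intro i
          have : x i ≤ ∑ k, x k :=
            Finset.single_le_sum (fun k _ => Nat.zero_le _) (Finset.mem_univ i)
          omega
        simp [Dop, hx0]
      rw [innerV_congr_left q α 0 f₂ (hz f₁), innerV_zero_left,
        innerV_congr_right q α 0 f₁ (hz f₂), innerV_zero_right]
    · have hD : ∀ g : (Fin h → ℕ) → ℂ, ∀ x ∈ Finset.Nat.antidiagonalTuple h (M + 1),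
          Dop q α (M + 1) g x
            = (fun y => Rop q M (Lop q α g) y + cc q h α (M + 1) * g y) x := by
        intro g x _
        exact Dop_eq q hq0 hq1 α hα M g x
      rw [innerV_congr_left q α (M + 1) f₂ (hD f₁),
        innerV_congr_right q α (M + 1) f₁ (hD f₂),
        innerV_add_mul_left, innerV_add_mul_right, conj_cc]
      congr 1
      have e2 : innerV q α (M + 1) f₁ (Rop q M (Lop q α f₂))
          = - innerV q α M (Lop q α f₁) (Lop q α f₂) := by
        rw [adjoint q hq0 hq1 α hα M f₁ (Lop q α f₂), neg_neg]
      have e0 : innerV q α (M + 1) f₂ (Rop q M (Lop q α f₁))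
          = - innerV q α M (Lop q α f₂) (Lop q α f₁) := by
        linear_combination adjoint q hq0 hq1 α hα M f₂ (Lop q α f₁)
      have e1 : innerV q α (M + 1) (Rop q M (Lop q α f₁)) f₂
          = - innerV q α M (Lop q α f₁) (Lop q α f₂) := by
        rw [innerV_conj q α (M + 1) (Rop q M (Lop q α f₁)) f₂, e0, map_neg,
          ← innerV_conj q α M (Lop q α f₁) (Lop q α f₂)]
      rw [e1, e2]
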